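/- Let 𝔥 : ℝ² → ℝ be continuous, positively 1-homogeneous, with 𝔥(ν) > 0 for ν ≠ 0, continuously differentiable on ℝ² \ {0}, and strictly convex in the sense that 𝔥(tν + (1−t)μ) < t·𝔥(ν) + (1−t)·𝔥(μ) for every t ∈ (0,1) and all vectors ν, μ which are not positively parallel. Then for every unit vector η ∈ 𝕊¹ the set {P ∈ ℝ² : 𝔥(P) = 1 and ⟨∇𝔥(P), η⟩ = 0} consists of exactly two points. -/

import Mathlib

open RealInnerProductSpace

private lemma aux_convex (𝔥 : EuclideanSpace ℝ (Fin 2) → ℝ)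
    (h_homog : ∀ c : ℝ, 0 ≤ c → ∀ v, 𝔥 (c • v) = c * 𝔥 v)
    (h_strict : ∀ t ∈ Set.Ioo (0:ℝ) 1, ∀ ν μ : EuclideanSpace ℝ (Fin 2),
      ¬ ((∃ l : ℝ, 0 ≤ l ∧ ν = l • μ) ∨ (∃ l : ℝ, 0 ≤ l ∧ μ = l • ν)) →
      𝔥 (t • ν + (1 - t) • μ) < t * 𝔥 ν + (1 - t) * 𝔥 μ) :
    ConvexOn ℝ Set.univ 𝔥 := by
  refine ⟨convex_univ, fun x _ y _ a b ha hb hab => ?_⟩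
  rcases eq_or_lt_of_le ha with ha0 | ha
  · have : b = 1 := by linarith
    simp [← ha0, this]
  rcases eq_or_lt_of_le hb with hb0 | hb
  · have : a = 1 := by linarith
    simp [← hb0, this]
  have hb' : b = 1 - a := by linarith
  subst hb'
  by_cases hp : (∃ l : ℝ, 0 ≤ l ∧ x = l • y) ∨ (∃ l : ℝ, 0 ≤ l ∧ y = l • x)
  · rcases hp with ⟨l, hl, rfl⟩ | ⟨l, hl, rfl⟩
    · have h1 : a • l • y + (1 - a) • y = (a * l + (1 - a)) • y := by
        rw [smul_smul, add_smul]
      rw [h1, h_homog _ (by nlinarith) y, h_homog _ hl y]; simp only [smul_eq_mul]; nlinarith [sq_nonneg a]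
    · have h1 : a • x + (1 - a) • l • x = (a + (1 - a) * l) • x := by
        rw [smul_smul, add_smul]
      rw [h1, h_homog _ (by nlinarith) x, h_homog _ hl x]; simp only [smul_eq_mul]; nlinarith [sq_nonneg a]
  · simpa only [smul_eq_mul] using le_of_lt (h_strict a ⟨ha, by linarith⟩ x y hp)

private lemma aux_lower (𝔥 : EuclideanSpace ℝ (Fin 2) → ℝ) (h_cont : Continuous 𝔥)
    (h_homog : ∀ c : ℝ, 0 ≤ c → ∀ v, 𝔥 (c • v) = c * 𝔥 v)
    (h_pos : ∀ v : EuclideanSpace ℝ (Fin 2), v ≠ 0 → 0 < 𝔥 v) :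
    ∃ c : ℝ, 0 < c ∧ ∀ v : EuclideanSpace ℝ (Fin 2), c * ‖v‖ ≤ 𝔥 v := by
  have hcpt : IsCompact (Metric.sphere (0:EuclideanSpace ℝ (Fin 2)) 1) := isCompact_sphere 0 1
  have hne : (Metric.sphere (0:EuclideanSpace ℝ (Fin 2)) 1).Nonempty := by
    refine ⟨EuclideanSpace.single 0 1, ?_⟩
    simp [EuclideanSpace.norm_single]
  obtain ⟨z, hz, hmin⟩ := hcpt.exists_isMinOn hne (h_cont.continuousOn)
  have hz0 : z ≠ 0 := by
    intro h; rw [h] at hz; simp at hz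
  refine ⟨𝔥 z, h_pos z hz0, fun v => ?_⟩
  rcases eq_or_ne v 0 with rfl | hv
  · have : 𝔥 (0:EuclideanSpace ℝ (Fin 2)) = 0 := by
      have := h_homog 0 le_rfl 0; simpa using this
    simp [this]
  · have hnv : (0:ℝ) < ‖v‖ := norm_pos_iff.2 hv
    have hmem : (‖v‖⁻¹ • v) ∈ Metric.sphere (0:EuclideanSpace ℝ (Fin 2)) 1 := by
      simp [norm_smul, abs_of_pos (inv_pos.2 hnv), inv_mul_cancel₀ hnv.ne']
    have h1 : 𝔥 z ≤ 𝔥 (‖v‖⁻¹ • v) := hmin hmem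
    have h2 : 𝔥 (‖v‖⁻¹ • v) = ‖v‖⁻¹ * 𝔥 v := h_homog _ (by positivity) v
    rw [h2] at h1
    calc 𝔥 z * ‖v‖ ≤ (‖v‖⁻¹ * 𝔥 v) * ‖v‖ := by nlinarith
    _ = 𝔥 v := by field_simp

private lemma aux_euler (𝔥 : EuclideanSpace ℝ (Fin 2) → ℝ)
    (h_homog : ∀ c : ℝ, 0 ≤ c → ∀ v, 𝔥 (c • v) = c * 𝔥 v)
    {x : EuclideanSpace ℝ (Fin 2)} {f' : EuclideanSpace ℝ (Fin 2) →L[ℝ] ℝ}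
    (hf : HasFDerivAt 𝔥 f' x) :
    f' x = 𝔥 x := by
  have hcurve : HasDerivAt (fun t : ℝ => 𝔥 (t • x)) (f' x) 1 := by
    have h1 : HasDerivAt (fun t : ℝ => t • x) ((1:ℝ) • x) 1 := by
      simpa using (hasDerivAt_id (1:ℝ)).smul_const x
    have hf1 : HasFDerivAt 𝔥 f' ((1:ℝ) • x) := by rwa [one_smul]
    have := hf1.comp_hasDerivAt 1 h1
    rw [one_smul] at this
    exact this
  have heq : (fun t : ℝ => 𝔥 (t • x)) =ᶠ[nhds 1] fun t : ℝ => t * 𝔥 x := by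
    filter_upwards [Ioi_mem_nhds (by norm_num : (0:ℝ) < 1)] with t ht
    exact h_homog t (le_of_lt ht) x
  have hcurve2 : HasDerivAt (fun t : ℝ => t * 𝔥 x) (f' x) 1 :=
    (Filter.EventuallyEq.hasDerivAt_iff heq).1 hcurve
  have hlin : HasDerivAt (fun t : ℝ => t * 𝔥 x) (𝔥 x) 1 := by
    simpa using (hasDerivAt_id (1:ℝ)).mul_const (𝔥 x)
  exact hcurve2.unique hlin

private lemma aux_gradineq (𝔥 : EuclideanSpace ℝ (Fin 2) → ℝ)
    (hconv : ConvexOn ℝ Set.univ 𝔥)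
    {x : EuclideanSpace ℝ (Fin 2)} {f' : EuclideanSpace ℝ (Fin 2) →L[ℝ] ℝ}
    (hf : HasFDerivAt 𝔥 f' x) (y : EuclideanSpace ℝ (Fin 2)) :
    f' (y - x) ≤ 𝔥 y - 𝔥 x := by
  set φ : ℝ → ℝ := fun t => 𝔥 (x + t • (y - x)) with hφ
  have hd : HasDerivAt φ (f' (y - x)) 0 := by
    have h1 : HasDerivAt (fun t : ℝ => x + t • (y - x)) (y - x) 0 := by
      simpa using ((hasDerivAt_id (0:ℝ)).smul_const (y - x)).const_add x
    have hf1 : HasFDerivAt 𝔥 f' (x + (0:ℝ) • (y - x)) := by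
      rwa [zero_smul, add_zero]
    have := hf1.comp_hasDerivAt 0 h1
    exact this
  have hslope : ∀ t ∈ Set.Ioc (0:ℝ) 1, slope φ 0 t ≤ 𝔥 y - 𝔥 x := by
    intro t ht
    have hcb : 𝔥 ((1 - t) • x + t • y) ≤ (1 - t) * 𝔥 x + t * 𝔥 y := by
      simpa only [smul_eq_mul] using
        hconv.2 (Set.mem_univ x) (Set.mem_univ y) (by linarith [ht.2]) (le_of_lt ht.1)
          (by ring)
    have hxy : x + t • (y - x) = (1 - t) • x + t • y := by
      rw [smul_sub, sub_smul, one_smul]; abel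
    have hφt : φ t ≤ (1 - t) * 𝔥 x + t * 𝔥 y := by rw [hφ]; simpa [hxy] using hcb
    have hφ0 : φ 0 = 𝔥 x := by simp [hφ]
    have key : φ t - φ 0 ≤ (𝔥 y - 𝔥 x) * t := by rw [hφ0]; nlinarith
    rw [slope_def_field, sub_zero, div_le_iff₀ ht.1]
    linarith
  have htend : Filter.Tendsto (slope φ 0) (nhdsWithin 0 (Set.Ioi 0))
      (nhds (f' (y - x))) := by
    refine (hasDerivAt_iff_tendsto_slope.1 hd).mono_left
      (nhdsWithin_mono _ ?_)
    intro t ht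
    exact ne_of_gt ht
  refine le_of_tendsto htend ?_
  filter_upwards [Ioc_mem_nhdsGT_of_mem (Set.mem_Ico.2 ⟨le_rfl, one_pos⟩)] with t ht
  exact hslope t ht

private lemma aux_unique_max (𝔥 : EuclideanSpace ℝ (Fin 2) → ℝ)
    (h_homog : ∀ c : ℝ, 0 ≤ c → ∀ v, 𝔥 (c • v) = c * 𝔥 v)
    (h_pos : ∀ v : EuclideanSpace ℝ (Fin 2), v ≠ 0 → 0 < 𝔥 v)
    (h_strict : ∀ t ∈ Set.Ioo (0:ℝ) 1, ∀ ν μ : EuclideanSpace ℝ (Fin 2),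
      ¬ ((∃ l : ℝ, 0 ≤ l ∧ ν = l • μ) ∨ (∃ l : ℝ, 0 ≤ l ∧ μ = l • ν)) →
      𝔥 (t • ν + (1 - t) • μ) < t * 𝔥 ν + (1 - t) * 𝔥 μ)
    {τ x y : EuclideanSpace ℝ (Fin 2)} (hx : 𝔥 x = 1) (hy : 𝔥 y = 1)
    (hmax : ∀ z : EuclideanSpace ℝ (Fin 2), 𝔥 z = 1 → ⟪τ, z⟫ ≤ ⟪τ, x⟫)
    (hxy : ⟪τ, y⟫ = ⟪τ, x⟫) (hposx : 0 < ⟪τ, x⟫) : x = y := by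
  by_contra hne
  have hpar : ¬ ((∃ l : ℝ, 0 ≤ l ∧ x = l • y) ∨ (∃ l : ℝ, 0 ≤ l ∧ y = l • x)) := by
    rintro (⟨l, hl, rfl⟩ | ⟨l, hl, rfl⟩)
    · rw [h_homog l hl y, hy, mul_one] at hx
      apply hne; rw [hx, one_smul]
    · rw [h_homog l hl x, hx, mul_one] at hy
      apply hne; rw [hy, one_smul]
  set z : EuclideanSpace ℝ (Fin 2) := (1/2 : ℝ) • x + (1 - 1/2 : ℝ) • y with hzdef
  have hz1 : 𝔥 z < 1 := by
    have := h_strict (1/2) (by norm_num) x y hpar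
    rw [hx, hy] at this
    calc 𝔥 z < 1/2 * 1 + (1 - 1/2) * 1 := this
    _ = 1 := by norm_num
  have hzin : ⟪τ, z⟫ = ⟪τ, x⟫ := by
    rw [hzdef, inner_add_right, real_inner_smul_right, real_inner_smul_right, hxy]
    ring
  have hz0 : z ≠ 0 := by
    intro h
    rw [h, inner_zero_right] at hzin
    linarith
  have hzpos := h_pos z hz0
  have hz' : 𝔥 ((𝔥 z)⁻¹ • z) = 1 := by
    rw [h_homog _ (by positivity) z, inv_mul_cancel₀ hzpos.ne']
  have := hmax _ hz'
  rw [real_inner_smul_right, hzin] at this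
  have hinv : 1 < (𝔥 z)⁻¹ := (one_lt_inv₀ hzpos).2 hz1
  nlinarith

/-- Let `𝔥 : ℝ² → ℝ` be continuous, positively 1-homogeneous, positive
away from `0`, `C¹` on `ℝ² \ {0}`, and strictly convex. Then for every unit vector `η`
the set of points `P` of the unit sphere `{𝔥 = 1}` at which the outer normal `∇𝔥 P` is
orthogonal to `η` consists of exactly two points. -/
theorem statement_9 (𝔥 : EuclideanSpace ℝ (Fin 2) → ℝ)
    (h_cont : Continuous 𝔥)
    (h_homog : ∀ c : ℝ, 0 ≤ c → ∀ v, 𝔥 (c • v) = c * 𝔥 v)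
    (h_pos : ∀ v : EuclideanSpace ℝ (Fin 2), v ≠ 0 → 0 < 𝔥 v)
    (h_C1 : ContDiffOn ℝ 1 𝔥 {(0 : EuclideanSpace ℝ (Fin 2))}ᶜ)
    (h_strict : ∀ t ∈ Set.Ioo (0:ℝ) 1, ∀ ν μ : EuclideanSpace ℝ (Fin 2),
      ¬ ((∃ l : ℝ, 0 ≤ l ∧ ν = l • μ) ∨ (∃ l : ℝ, 0 ≤ l ∧ μ = l • ν)) →
      𝔥 (t • ν + (1 - t) • μ) < t * 𝔥 ν + (1 - t) * 𝔥 μ)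
    (η : EuclideanSpace ℝ (Fin 2)) (hη : ‖η‖ = 1) :
    ∃ P Q : EuclideanSpace ℝ (Fin 2), P ≠ Q ∧
      {x : EuclideanSpace ℝ (Fin 2) | 𝔥 x = 1 ∧ ⟪gradient 𝔥 x, η⟫ = 0} = {P, Q} := by
  classical
  have h00 : 𝔥 0 = 0 := by simpa using h_homog 0 le_rfl 0
  have hconv := aux_convex 𝔥 h_homog h_strict
  obtain ⟨c, hc, hlow⟩ := aux_lower 𝔥 h_cont h_homog h_pos
  -- the rotated vector τ
  have hn : η 0 ^ 2 + η 1 ^ 2 = 1 := by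
    have h2 : ‖η‖ ^ 2 = 1 := by rw [hη]; norm_num
    rw [EuclideanSpace.norm_eq] at h2
    rw [Real.sq_sqrt (by positivity)] at h2
    simpa [Fin.sum_univ_two] using h2
  set τ : EuclideanSpace ℝ (Fin 2) :=
    (EuclideanSpace.equiv (Fin 2) ℝ).symm ![-η 1, η 0] with hτdef
  have hτ0 : τ 0 = -η 1 := rfl
  have hτ1 : τ 1 = η 0 := rfl
  have hτη : ⟪τ, η⟫ = 0 := by
    simp only [PiLp.inner_apply, RCLike.inner_apply, conj_trivial, Fin.sum_univ_two,
      hτ0, hτ1]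
    ring
  have hττ : ⟪τ, τ⟫ = 1 := by
    simp only [PiLp.inner_apply, RCLike.inner_apply, conj_trivial, Fin.sum_univ_two,
      hτ0, hτ1]
    nlinarith
  have hdecomp : ∀ g : EuclideanSpace ℝ (Fin 2), ⟪g, η⟫ = 0 → g = ⟪g, τ⟫ • τ := by
    intro g hg
    simp only [PiLp.inner_apply, RCLike.inner_apply, conj_trivial, Fin.sum_univ_two] at hg ⊢
    ext i
    fin_cases i
    · show g 0 = (τ 0 * g 0 + τ 1 * g 1) * τ 0
      rw [hτ0, hτ1]
      linear_combination (η 0) * hg - g 0 * hn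
    · show g 1 = (τ 0 * g 0 + τ 1 * g 1) * τ 1
      rw [hτ0, hτ1]
      linear_combination (η 1) * hg - g 1 * hn
  have hτne : τ ≠ 0 := by
    intro h
    rw [h, inner_zero_right] at hττ
    linarith
  -- the level set S
  set S : Set (EuclideanSpace ℝ (Fin 2)) := {x | 𝔥 x = 1} with hSdef
  have hSclosed : IsClosed S := isClosed_eq h_cont continuous_const
  have hSbdd : Bornology.IsBounded S := by
    rw [isBounded_iff_forall_norm_le]
    refine ⟨c⁻¹, fun x hx => ?_⟩
    have h1 : c * ‖x‖ ≤ 1 := by rw [← hx]; exact hlow x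
    nlinarith [mul_inv_cancel₀ hc.ne']
  have hScompact : IsCompact S := Metric.isCompact_of_isClosed_isBounded hSclosed hSbdd
  have hmem : ∀ v : EuclideanSpace ℝ (Fin 2), v ≠ 0 → (𝔥 v)⁻¹ • v ∈ S := by
    intro v hv
    show 𝔥 _ = 1
    rw [h_homog _ (inv_nonneg.2 (h_pos v hv).le) v, inv_mul_cancel₀ (h_pos v hv).ne']
  have hSne : S.Nonempty := ⟨_, hmem τ hτne⟩
  have hcont_inner : Continuous fun z : EuclideanSpace ℝ (Fin 2) => ⟪τ, z⟫ :=
    continuous_const.inner continuous_id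
  obtain ⟨P, hPS, hPmax⟩ := hScompact.exists_isMaxOn hSne hcont_inner.continuousOn
  obtain ⟨Q, hQS, hQmin⟩ := hScompact.exists_isMinOn hSne hcont_inner.continuousOn
  have hPmax' : ∀ z ∈ S, ⟪τ, z⟫ ≤ ⟪τ, P⟫ := fun z hz => hPmax hz
  have hQmin' : ∀ z ∈ S, ⟪τ, Q⟫ ≤ ⟪τ, z⟫ := fun z hz => hQmin hz
  have hτpos : 0 < 𝔥 τ := h_pos τ hτne
  have hPpos : 0 < ⟪τ, P⟫ := by
    have h1 := hPmax' _ (hmem τ hτne)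
    rw [real_inner_smul_right, hττ, mul_one] at h1
    exact lt_of_lt_of_le (by positivity) h1
  have hQneg : ⟪τ, Q⟫ < 0 := by
    have hτne' : (-τ : EuclideanSpace ℝ (Fin 2)) ≠ 0 := by
      simpa using hτne
    have h1 := hQmin' _ (hmem (-τ) hτne')
    rw [real_inner_smul_right, inner_neg_right, hττ] at h1
    have : 0 < 𝔥 (-τ) := h_pos _ hτne'
    have h2 : (𝔥 (-τ))⁻¹ * -1 < 0 := by
      rw [mul_neg_one]
      simpa using (inv_pos.2 this)
    linarith
  -- differentiability helpers
  have hfd : ∀ x : EuclideanSpace ℝ (Fin 2), x ≠ 0 → HasFDerivAt 𝔥 (fderiv ℝ 𝔥 x) x := by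
    intro x hx
    have hca : ContDiffAt ℝ 1 𝔥 x :=
      h_C1.contDiffAt (IsOpen.mem_nhds isOpen_compl_singleton hx)
    exact (hca.differentiableAt one_ne_zero).hasFDerivAt
  have hfs : ∀ x : EuclideanSpace ℝ (Fin 2), x ≠ 0 →
      HasStrictFDerivAt 𝔥 (fderiv ℝ 𝔥 x) x := by
    intro x hx
    have hca : ContDiffAt ℝ 1 𝔥 x :=
      h_C1.contDiffAt (IsOpen.mem_nhds isOpen_compl_singleton hx)
    exact hca.hasStrictFDerivAt one_ne_zero
  have hginner : ∀ x y : EuclideanSpace ℝ (Fin 2), ⟪gradient 𝔥 x, y⟫ = fderiv ℝ 𝔥 x y := by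
    intro x y
    rw [gradient]
    exact InnerProductSpace.toDual_symm_apply
  have hne0 : ∀ x : EuclideanSpace ℝ (Fin 2), 𝔥 x = 1 → x ≠ 0 := by
    intro x hx h
    rw [h, h00] at hx
    norm_num at hx
  -- Lagrange multipliers: at a local extremum of ⟪τ, ·⟫ on S the gradient is ⊥ η
  have horth : ∀ x : EuclideanSpace ℝ (Fin 2), 𝔥 x = 1 →
      IsLocalExtrOn (fun z : EuclideanSpace ℝ (Fin 2) => ⟪τ, z⟫) S x →
      ⟪gradient 𝔥 x, η⟫ = 0 := by
    intro x hx hext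
    have hx0 : x ≠ 0 := hne0 x hx
    have hSeq : {y : EuclideanSpace ℝ (Fin 2) | 𝔥 y = 𝔥 x} = S := by
      rw [hx]
    have hext' : IsLocalExtrOn (fun z : EuclideanSpace ℝ (Fin 2) => ⟪τ, z⟫)
        {y : EuclideanSpace ℝ (Fin 2) | 𝔥 y = 𝔥 x} x := by
      rw [hSeq]; exact hext
    obtain ⟨a, b, hab, heq⟩ :=
      hext'.exists_multipliers_of_hasStrictFDerivAt_1d (hfs x hx0)
        ((innerSL ℝ τ).hasStrictFDerivAt)
    have happ : ∀ v : EuclideanSpace ℝ (Fin 2),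
        a * fderiv ℝ 𝔥 x v + b * ⟪τ, v⟫ = 0 := by
      intro v
      have := congrArg (fun L : EuclideanSpace ℝ (Fin 2) →L[ℝ] ℝ => L v) heq
      simpa using this
    have ha : a ≠ 0 := by
      intro h0
      have h1 := happ τ
      rw [h0, hττ] at h1
      simp only [zero_mul, zero_add, mul_one] at h1
      exact hab (by simp [h0, h1])
    have h2 := happ η
    rw [hτη, mul_zero, add_zero] at h2
    rw [hginner]
    exact (mul_eq_zero.1 h2).resolve_left ha
  -- gradient inequality on S
  have hgi : ∀ x : EuclideanSpace ℝ (Fin 2), 𝔥 x = 1 →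
      ∀ y ∈ S, ⟪gradient 𝔥 x, y⟫ ≤ ⟪gradient 𝔥 x, x⟫ := by
    intro x hx y hy
    have hx0 : x ≠ 0 := hne0 x hx
    have h1 := aux_gradineq 𝔥 hconv (hfd x hx0) y
    rw [map_sub] at h1
    rw [hginner, hginner]
    have hy1 : 𝔥 y = 1 := hy
    linarith [h1, hx ▸ hy1 ▸ h1]
  refine ⟨P, Q, ?_, ?_⟩
  · intro h
    rw [h] at hPpos
    linarith
  · ext x
    simp only [Set.mem_setOf_eq, Set.mem_insert_iff, Set.mem_singleton_iff]
    constructor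
    · rintro ⟨hx1, hxo⟩
      have hx0 : x ≠ 0 := hne0 x hx1
      set g := gradient 𝔥 x with hg
      have hgd : g = ⟪g, τ⟫ • τ := hdecomp g hxo
      have hEuler : ⟪g, x⟫ = 1 := by
        rw [hg, hginner, aux_euler 𝔥 h_homog (hfd x hx0), hx1]
      set cx := ⟪g, τ⟫ with hcxdef
      have hcx : cx * ⟪τ, x⟫ = 1 := by
        rw [← hEuler]
        conv_rhs => rw [hgd]
        rw [real_inner_smul_left]
      have hcx0 : cx ≠ 0 := by
        intro h
        rw [h, zero_mul] at hcx
        norm_num at hcx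
      have hxmax : ∀ y ∈ S, cx * ⟪τ, y⟫ ≤ cx * ⟪τ, x⟫ := by
        intro y hy
        have h1 := hgi x hx1 y hy
        rw [show ⟪g, y⟫ = cx * ⟪τ, y⟫ by rw [hgd, real_inner_smul_left],
          show ⟪g, x⟫ = cx * ⟪τ, x⟫ by rw [hgd, real_inner_smul_left]] at h1
        exact h1
      rcases lt_or_gt_of_ne hcx0 with hneg | hpos
      · -- x is the minimizer, x = Q
        right
        have hxmin : ∀ y : EuclideanSpace ℝ (Fin 2), 𝔥 y = 1 → ⟪τ, x⟫ ≤ ⟪τ, y⟫ := by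
          intro y hy
          exact (mul_le_mul_left_of_neg hneg).1 (hxmax y hy)
        have hτx : ⟪τ, x⟫ < 0 := by
          have h1 : ⟪τ, x⟫ = cx⁻¹ := eq_inv_of_mul_eq_one_right hcx
          rw [h1]
          exact inv_neg''.2 hneg
        have hQx : ⟪τ, Q⟫ = ⟪τ, x⟫ :=
          le_antisymm (hQmin' x hx1) (hxmin Q hQS)
        have := aux_unique_max 𝔥 h_homog h_pos h_strict (τ := -τ) hx1 hQS
          (fun z hz => by
            simp only [inner_neg_left]
            exact neg_le_neg (hxmin z hz))
          (by simp only [inner_neg_left, hQx])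
          (by simp only [inner_neg_left]; linarith)
        exact this
      · -- x is the maximizer, x = P
        left
        have hxmax' : ∀ y : EuclideanSpace ℝ (Fin 2), 𝔥 y = 1 → ⟪τ, y⟫ ≤ ⟪τ, x⟫ := by
          intro y hy
          exact le_of_mul_le_mul_left (hxmax y hy) hpos
        have hτx : 0 < ⟪τ, x⟫ := by
          have h1 : ⟪τ, x⟫ = cx⁻¹ := eq_inv_of_mul_eq_one_right hcx
          rw [h1]
          exact inv_pos.2 hpos
        have hPx : ⟪τ, P⟫ = ⟪τ, x⟫ :=
          le_antisymm (hxmax' P hPS) (hPmax' x hx1)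
        exact aux_unique_max 𝔥 h_homog h_pos h_strict hx1 hPS hxmax' hPx hτx
    · rintro (rfl | rfl)
      · exact ⟨hPS, horth x hPS (Or.inr hPmax.localize)⟩
      · exact ⟨hQS, horth x hQS (Or.inl hQmin.localize)⟩
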